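/- Let Sh(k,l) denote the set of (k,l)-shuffles in the symmetric group S_{k+l} and for σ ∈ Sh(k,l) let m_k(σ) = max{i ∈ [k] : σ(1)=1,…,σ(i)=i} (0 if σ(1)≠1). In the Com-PreLie bialgebra T(V,f) defined by x₁…xₘ • y₁…yₙ = Σᵢ x₁…x_{i-1}f(xᵢ)(x_{i+1}…xₘ ⧢ y₁…yₙ), one has for v₁,…,v_{k+l} ∈ V: v₁…vₖ • v_{k+1}…v_{k+l} = Σ_{σ∈Sh(k,l)} Σ_{i=1}^{m_k(σ)} (Id^{⊗(i-1)}⊗f⊗Id^{⊗(k+l-i)})(v_{σ⁻¹(1)}…v_{σ⁻¹(k+l)}). -/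

import Mathlib

open TensorProduct

/-- The word `x₁…xₙ` in the tensor algebra. -/
noncomputable def word {K V : Type*} [CommRing K] [AddCommGroup V] [Module K V]
    (l : List V) : TensorAlgebra K V :=
  (l.map (TensorAlgebra.ι K)).prod

/-- `σ` is a `(k,l)`-shuffle: increasing on the first `k` positions and on the
last `l` positions. -/
def IsShuffle (k l : ℕ) (σ : Equiv.Perm (Fin (k + l))) : Prop :=
  (∀ i j : Fin (k + l), i < j → (j : ℕ) < k → σ i < σ j) ∧
  (∀ i j : Fin (k + l), i < j → k ≤ (i : ℕ) → σ i < σ j)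

/-- `m_k(σ)`: the largest `m ≤ k` such that `σ` fixes the first `m` positions
(`0` if `σ` does not fix the first position). -/
noncomputable def mk' (k l : ℕ) (σ : Equiv.Perm (Fin (k + l))) : ℕ :=
  ((Finset.range (k + 1)).filter
    (fun m => ∀ j : Fin (k + l), (j : ℕ) < m → σ j = j)).sup id


lemma perm_eq_one_of_strictMono {n : ℕ} (σ : Equiv.Perm (Fin n)) (h : StrictMono ⇑σ) : σ = 1 := by
  have hwf : WellFoundedLT (Fin n) := inferInstance
  have hinv : StrictMono ⇑σ⁻¹ := fun a b hab => by
    rw [← h.lt_iff_lt]; simpa using hab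
  have h1 : ∀ i, i ≤ σ i := fun i => h.le_apply
  have h2 : ∀ i : Fin n, i ≤ σ⁻¹ i := fun i => hinv.le_apply
  ext i
  have h3 := h2 (σ i)
  rw [show σ⁻¹ (σ i) = i from σ.symm_apply_apply i] at h3
  have h4 : σ i = i := le_antisymm h3 (h1 i)
  simp [h4]

def Cond (n k q : ℕ) (σ : Equiv.Perm (Fin n)) : Prop :=
  ((∀ i j : Fin n, i < j → (j : ℕ) < k → σ i < σ j) ∧
   (∀ i j : Fin n, i < j → k ≤ (i : ℕ) → σ i < σ j)) ∧
  (∀ j : Fin n, (j : ℕ) < q → σ j = j)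

lemma cond_ge {n q : ℕ} {σ : Equiv.Perm (Fin n)} (hσ : ∀ j : Fin n, (j : ℕ) < q → σ j = j)
    {t : Fin n} (ht : q ≤ (t : ℕ)) : q ≤ (σ t : ℕ) := by
  by_contra hc
  push_neg at hc
  have h2 : σ (σ t) = σ t := hσ (σ t) hc
  have := σ.injective h2
  rw [this] at hc
  omega

lemma cond_one {n k q : ℕ} : Cond n k q 1 := by
  refine ⟨⟨fun i j hij _ => ?_, fun i j hij _ => ?_⟩, fun j _ => rfl⟩ <;> simpa using hij

lemma cond_dichotomy {n q m : ℕ} (hq : q + m < n) (hm : 1 ≤ m) {σ : Equiv.Perm (Fin n)}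
    (hσ : Cond n (q + m) q σ) :
    σ ⟨q, by omega⟩ = ⟨q, by omega⟩ ∨ σ ⟨q + m, hq⟩ = ⟨q, by omega⟩ := by
  obtain ⟨⟨ha, hb⟩, hfix⟩ := hσ
  have hx : q < n := by omega
  obtain ⟨t, ht⟩ := σ.surjective ⟨q, hx⟩
  have hvt : (σ t : ℕ) = q := by rw [ht]
  have htq : q ≤ (t : ℕ) := by
    by_contra hc
    push_neg at hc
    have h1 := hfix t hc
    rw [h1] at hvt
    omega
  rcases lt_or_ge (t : ℕ) (q + m) with h1 | h1
  · left
    have hteq : (t : ℕ) = q := by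
      by_contra hne
      have hlt : (⟨q, hx⟩ : Fin n) < t := by
        rw [Fin.lt_def]; simp only []; omega
      have h3 := ha ⟨q, hx⟩ t hlt h1
      rw [Fin.lt_def] at h3
      have h4 := cond_ge hfix (t := (⟨q, hx⟩ : Fin n)) (le_of_eq rfl)
      omega
    have h5 : t = ⟨q, hx⟩ := Fin.ext hteq
    exact (congrArg σ h5.symm).trans ht
  · right
    have hteq : (t : ℕ) = q + m := by
      by_contra hne
      have hlt : (⟨q + m, hq⟩ : Fin n) < t := by
        rw [Fin.lt_def]; simp only []; omega
      have h3 := hb ⟨q + m, hq⟩ t hlt (le_of_eq rfl)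
      rw [Fin.lt_def] at h3
      have h4 := cond_ge hfix (t := (⟨q + m, hq⟩ : Fin n)) (by simp only []; omega)
      omega
    have h5 : t = ⟨q + m, hq⟩ := Fin.ext hteq
    exact (congrArg σ h5.symm).trans ht

def cycF (n q m : ℕ) (h : q + m < n) (j : Fin n) : Fin n :=
  if (j : ℕ) = q then ⟨q + m, h⟩
  else if q < (j : ℕ) ∧ (j : ℕ) ≤ q + m then ⟨(j : ℕ) - 1, by omega⟩ else j

def cycI (n q m : ℕ) (h : q + m < n) (j : Fin n) : Fin n :=
  if (j : ℕ) = q + m then ⟨q, by omega⟩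
  else if h2 : q ≤ (j : ℕ) ∧ (j : ℕ) < q + m then ⟨(j : ℕ) + 1, by omega⟩ else j

lemma cycF_val (n q m : ℕ) (h : q + m < n) (j : Fin n) :
    (cycF n q m h j : ℕ) = if (j : ℕ) = q then q + m
      else if q < (j : ℕ) ∧ (j : ℕ) ≤ q + m then (j : ℕ) - 1 else (j : ℕ) := by
  unfold cycF
  split_ifs <;> rfl

lemma cycI_val (n q m : ℕ) (h : q + m < n) (j : Fin n) :
    (cycI n q m h j : ℕ) = if (j : ℕ) = q + m then q
      else if q ≤ (j : ℕ) ∧ (j : ℕ) < q + m then (j : ℕ) + 1 else (j : ℕ) := by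
  unfold cycI
  split_ifs <;> rfl

def cyc (n q m : ℕ) (h : q + m < n) : Equiv.Perm (Fin n) where
  toFun := cycF n q m h
  invFun := cycI n q m h
  left_inv j := by
    apply Fin.ext
    rw [show (cycI n q m h (cycF n q m h j) : ℕ) = _ from cycI_val n q m h _, cycF_val n q m h j]
    have := j.isLt
    split_ifs <;> omega
  right_inv j := by
    apply Fin.ext
    rw [show (cycF n q m h (cycI n q m h j) : ℕ) = _ from cycF_val n q m h _, cycI_val n q m h j]
    have := j.isLt
    split_ifs <;> omega

lemma cyc_val {n q m : ℕ} (h : q + m < n) (j : Fin n) :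
    ((cyc n q m h) j : ℕ) = if (j : ℕ) = q then q + m
      else if q < (j : ℕ) ∧ (j : ℕ) ≤ q + m then (j : ℕ) - 1 else (j : ℕ) :=
  cycF_val n q m h j

lemma cyc_inv_val {n q m : ℕ} (h : q + m < n) (j : Fin n) :
    ((cyc n q m h)⁻¹ j : ℕ) = if (j : ℕ) = q + m then q
      else if q ≤ (j : ℕ) ∧ (j : ℕ) < q + m then (j : ℕ) + 1 else (j : ℕ) :=
  cycI_val n q m h j

lemma cond_cyc_fwd {n q m : ℕ} (hq2 : q + m < n) {σ : Equiv.Perm (Fin n)}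
    (hσ : Cond n (q + m) q σ) (hv : σ ⟨q + m, hq2⟩ = ⟨q, by omega⟩) :
    Cond n (q + 1 + m) (q + 1) (σ * cyc n q m hq2) := by
  obtain ⟨⟨ha, hb⟩, hfix⟩ := hσ
  have hge : ∀ t : Fin n, q ≤ (t : ℕ) → q ≤ (σ t : ℕ) := fun t h => cond_ge hfix h
  have hvmk : ((⟨q, by omega⟩ : Fin n) : ℕ) = q := rfl
  have hvmk2 : ((⟨q + m, hq2⟩ : Fin n) : ℕ) = q + m := rfl
  have hvq : ∀ t : Fin n, (t : ℕ) ≠ q + m → q ≤ (t : ℕ) → q < (σ t : ℕ) := by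
    intro t hne h
    rcases (hge t h).lt_or_eq with h2 | h2
    · exact h2
    · exfalso
      apply hne
      have h3 : σ t = ⟨q, by omega⟩ := Fin.ext h2.symm
      have h4 := σ.injective (h3.trans hv.symm)
      rw [h4]
  have hcv := cyc_val hq2
  refine ⟨⟨?_, ?_⟩, ?_⟩
  · intro i j hij hj
    simp only [Equiv.Perm.mul_apply]
    rw [Fin.lt_def] at hij ⊢
    have hcvi := hcv i
    have hcvj := hcv j
    rcases lt_or_ge (j : ℕ) q with h1 | h1
    · have hci : cyc n q m hq2 i = i := Fin.ext (by rw [hcvi]; split_ifs <;> omega)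
      have hcj : cyc n q m hq2 j = j := Fin.ext (by rw [hcvj]; split_ifs <;> omega)
      rw [hci, hcj, hfix i (by omega), hfix j (by omega)]
      exact hij
    · rcases lt_or_ge (i : ℕ) q with h2 | h2
      · -- i < q ≤ j
        have hci : cyc n q m hq2 i = i := Fin.ext (by rw [hcvi]; split_ifs <;> omega)
        rw [hci, hfix i h2]
        rcases Nat.eq_or_lt_of_le h1 with hq | hq
        · have hcj : cyc n q m hq2 j = ⟨q + m, hq2⟩ :=
            Fin.ext (by rw [hcvj, hvmk2]; split_ifs <;> omega)
          rw [hcj, hv, hvmk]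
          omega
        · have hj1 : ((cyc n q m hq2 j : Fin n) : ℕ) ≠ q + m := by
            rw [hcvj]; split_ifs <;> omega
          have hj2 : q ≤ ((cyc n q m hq2 j : Fin n) : ℕ) := by
            rw [hcvj]; split_ifs <;> omega
          have := hvq _ hj1 hj2
          omega
      · rcases Nat.eq_or_lt_of_le h2 with h3 | h3
        · -- i = q < j
          have hci : cyc n q m hq2 i = ⟨q + m, hq2⟩ :=
            Fin.ext (by rw [hcvi, hvmk2]; split_ifs <;> omega)
          rw [hci, hv, hvmk]
          have hj1 : ((cyc n q m hq2 j : Fin n) : ℕ) ≠ q + m := by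
            rw [hcvj]; split_ifs <;> omega
          have hj2 : q ≤ ((cyc n q m hq2 j : Fin n) : ℕ) := by
            rw [hcvj]; split_ifs <;> omega
          have := hvq _ hj1 hj2
          omega
        · -- q < i < j
          have h4 := ha (cyc n q m hq2 i) (cyc n q m hq2 j)
            (by rw [Fin.lt_def, hcvi, hcvj]; split_ifs <;> omega)
            (by rw [hcvj]; split_ifs <;> omega)
          rw [Fin.lt_def] at h4
          exact h4
  · intro i j hij hi
    simp only [Equiv.Perm.mul_apply]
    rw [Fin.lt_def] at hij ⊢
    have hci : cyc n q m hq2 i = i := Fin.ext (by rw [hcv i]; split_ifs <;> omega)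
    have hcj : cyc n q m hq2 j = j := Fin.ext (by rw [hcv j]; split_ifs <;> omega)
    rw [hci, hcj]
    have := hb i j (by rw [Fin.lt_def]; omega) (by omega)
    rw [Fin.lt_def] at this
    exact this
  · intro j hj
    rcases lt_or_ge (j : ℕ) q with h1 | h1
    · have hcj : cyc n q m hq2 j = j := Fin.ext (by rw [hcv j]; split_ifs <;> omega)
      simp only [Equiv.Perm.mul_apply, hcj]
      exact hfix j h1
    · have h2 : (j : ℕ) = q := by omega
      have hcj : cyc n q m hq2 j = ⟨q + m, hq2⟩ :=
        Fin.ext (by rw [cyc_val hq2 j, hvmk2]; split_ifs <;> omega)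
      simp only [Equiv.Perm.mul_apply, hcj, hv]
      exact Fin.ext h2.symm

lemma cond_cyc_bwd {n q m : ℕ} (hq2 : q + m < n) {σ : Equiv.Perm (Fin n)}
    (hσ : Cond n (q + 1 + m) (q + 1) σ) :
    Cond n (q + m) q (σ * (cyc n q m hq2)⁻¹) ∧
      (σ * (cyc n q m hq2)⁻¹) ⟨q + m, hq2⟩ = ⟨q, by omega⟩ := by
  obtain ⟨⟨ha, hb⟩, hfix⟩ := hσ
  have hge : ∀ t : Fin n, q + 1 ≤ (t : ℕ) → q + 1 ≤ (σ t : ℕ) := fun t h => cond_ge hfix h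
  have hvmk : ((⟨q, by omega⟩ : Fin n) : ℕ) = q := rfl
  have hvmk2 : ((⟨q + m, hq2⟩ : Fin n) : ℕ) = q + m := rfl
  have hcv := cyc_inv_val hq2
  have hmain : (σ * (cyc n q m hq2)⁻¹) ⟨q + m, hq2⟩ = ⟨q, by omega⟩ := by
    have hc : (cyc n q m hq2)⁻¹ ⟨q + m, hq2⟩ = ⟨q, by omega⟩ :=
      Fin.ext (by rw [hcv, hvmk, hvmk2]; split_ifs <;> omega)
    simp only [Equiv.Perm.mul_apply, hc]
    exact hfix _ (by rw [hvmk]; omega)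
  refine ⟨⟨⟨?_, ?_⟩, ?_⟩, hmain⟩
  · intro i j hij hj
    simp only [Equiv.Perm.mul_apply]
    rw [Fin.lt_def] at hij ⊢
    have hcvi := hcv i
    have hcvj := hcv j
    rcases lt_or_ge (j : ℕ) q with h1 | h1
    · have hci : (cyc n q m hq2)⁻¹ i = i := Fin.ext (by rw [hcvi]; split_ifs <;> omega)
      have hcj : (cyc n q m hq2)⁻¹ j = j := Fin.ext (by rw [hcvj]; split_ifs <;> omega)
      rw [hci, hcj, hfix i (by omega), hfix j (by omega)]
      exact hij
    · rcases lt_or_ge (i : ℕ) q with h2 | h2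
      · have hci : (cyc n q m hq2)⁻¹ i = i := Fin.ext (by rw [hcvi]; split_ifs <;> omega)
        rw [hci, hfix i (by omega)]
        have hj1 : q + 1 ≤ (((cyc n q m hq2)⁻¹ j : Fin n) : ℕ) := by
          rw [hcvj]; split_ifs <;> omega
        have := hge _ hj1
        omega
      · have h4 := ha ((cyc n q m hq2)⁻¹ i) ((cyc n q m hq2)⁻¹ j)
          (by rw [Fin.lt_def, hcvi, hcvj]; split_ifs <;> omega)
          (by rw [hcvj]; split_ifs <;> omega)
        rw [Fin.lt_def] at h4
        exact h4
  · intro i j hij hi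
    simp only [Equiv.Perm.mul_apply]
    rw [Fin.lt_def] at hij ⊢
    have hcj : (cyc n q m hq2)⁻¹ j = j := Fin.ext (by rw [hcv j]; split_ifs <;> omega)
    rcases Nat.eq_or_lt_of_le hi with h1 | h1
    · have hci : (cyc n q m hq2)⁻¹ i = ⟨q, by omega⟩ :=
        Fin.ext (by rw [hcv i, hvmk]; split_ifs <;> omega)
      rw [hci, hcj, hfix _ (by rw [hvmk]; omega), hvmk]
      have := hge j (by omega)
      omega
    · have hci : (cyc n q m hq2)⁻¹ i = i := Fin.ext (by rw [hcv i]; split_ifs <;> omega)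
      rw [hci, hcj]
      have := hb i j (by rw [Fin.lt_def]; omega) (by omega)
      rw [Fin.lt_def] at this
      exact this
  · intro j hj
    have hcj : (cyc n q m hq2)⁻¹ j = j := Fin.ext (by rw [hcv j]; split_ifs <;> omega)
    simp only [Equiv.Perm.mul_apply, hcj]
    exact hfix j (by omega)


section WordLemmas
variable {K V : Type*} [CommRing K] [AddCommGroup V] [Module K V]

lemma word_nil : word (K := K) ([] : List V) = 1 := rfl

lemma word_cons (x : V) (xs : List V) :
    word (K := K) (x :: xs) = TensorAlgebra.ι K x * word (K := K) xs := by
  simp [word]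

lemma word_append (a b : List V) :
    word (K := K) (a ++ b) = word (K := K) a * word (K := K) b := by
  simp [word]

lemma word_singleton (x : V) : word (K := K) [x] = TensorAlgebra.ι K x := by
  simp [word]

end WordLemmas

lemma take_ofFn' {V : Type*} {a : ℕ} (g : Fin a → V) (t : ℕ) (h : t ≤ a) :
    (List.ofFn g).take t = List.ofFn (fun j : Fin t => g ⟨j, by omega⟩) := by
  apply List.ext_getElem
  · simp [h]
  · intro i h1 h2
    simp

lemma drop_ofFn' {V : Type*} {a : ℕ} (g : Fin a → V) (t : ℕ) (h : t ≤ a) :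
    (List.ofFn g).drop t = List.ofFn (fun j : Fin (a - t) => g ⟨t + j, by omega⟩) := by
  apply List.ext_getElem
  · simp
  · intro i h1 h2
    simp

lemma mk'_lt_iff (k l p : ℕ) (σ : Equiv.Perm (Fin (k + l))) :
    p < mk' k l σ ↔ p < k ∧ ∀ j : Fin (k + l), (j : ℕ) ≤ p → σ j = j := by
  unfold mk'
  rw [Finset.lt_sup_iff]
  constructor
  · rintro ⟨m, hm, hpm⟩
    rw [Finset.mem_filter, Finset.mem_range] at hm
    simp only [id] at hpm
    exact ⟨by omega, fun j hj => hm.2 j (by omega)⟩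
  · rintro ⟨hpk, hfix⟩
    exact ⟨p + 1, Finset.mem_filter.2 ⟨Finset.mem_range.2 (by omega),
      fun j hj => hfix j (by omega)⟩, by simp⟩

instance Cond.decidablePred {n k q : ℕ} : DecidablePred (Cond n k q) := fun σ => by
  unfold Cond; infer_instance

section Master
variable {K V : Type*} [Field K] [AddCommGroup V] [Module K V]

local notation "ιV" => TensorAlgebra.ι K

lemma word_ofFn_succ_last (t : ℕ) (g : ℕ → V) :
    word (K := K) (List.ofFn fun j : Fin (t + 1) => g (j : ℕ)) =
      word (K := K) (List.ofFn fun j : Fin t => g (j : ℕ)) * ιV (g t) := by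
  rw [List.ofFn_succ', List.concat_eq_append, word_append, word_singleton]
  have h1 : (fun j : Fin t => g ((Fin.castSucc j : Fin (t+1)) : ℕ)) =
      (fun j : Fin t => g (j : ℕ)) := by
    funext j; simp
  have h2 : g ((Fin.last t : Fin (t+1)) : ℕ) = g t := by simp
  rw [show (fun j : Fin t => g (((j : Fin t).castSucc : Fin (t+1)) : ℕ)) =
      (fun j : Fin t => g (j : ℕ)) from h1]
  congr 1

lemma word_ofFn_succ_head (t : ℕ) (g : ℕ → V) :
    word (K := K) (List.ofFn fun j : Fin (t + 1) => g (j : ℕ)) =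
      ιV (g 0) * word (K := K) (List.ofFn fun j : Fin t => g ((j : ℕ) + 1)) := by
  rw [List.ofFn_succ, word_cons]
  have h1 : (fun j : Fin t => g (((j : Fin t).succ : Fin (t+1)) : ℕ)) =
      (fun j : Fin t => g ((j : ℕ) + 1)) := by
    funext j; simp
  congr 1

lemma master_m0 (sh : TensorAlgebra K V →ₗ[K] TensorAlgebra K V →ₗ[K] TensorAlgebra K V)
    (hshone : ∀ u, sh 1 u = u) (q l n : ℕ) (hn : n = q + 0 + l) (u : ℕ → V) :
    ∑ σ ∈ Finset.univ.filter (Cond n (q + 0) q),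
        word (K := K) (List.ofFn fun j : Fin n => u ((σ⁻¹ j : Fin n) : ℕ)) =
      word (K := K) (List.ofFn fun j : Fin q => u (j : ℕ)) *
        sh (word (K := K) (List.ofFn fun j : Fin 0 => u (q + (j : ℕ))))
           (word (K := K) (List.ofFn fun j : Fin l => u (q + 0 + (j : ℕ)))) := by
  subst hn
  have hset : Finset.univ.filter (Cond (q + 0 + l) (q + 0) q) = {1} := by
    ext σ
    simp only [Finset.mem_filter, Finset.mem_univ, true_and, Finset.mem_singleton]
    constructor
    · rintro ⟨⟨ha, hb⟩, hfix⟩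
      apply perm_eq_one_of_strictMono
      intro i j hij
      have hijn : (i : ℕ) < (j : ℕ) := hij
      rcases lt_or_ge (j : ℕ) q with h1 | h1
      · rw [hfix i (by omega), hfix j (by omega)]
        exact hij
      · rcases lt_or_ge (i : ℕ) q with h2 | h2
        · rw [hfix i h2, Fin.lt_def]
          have h3 := cond_ge hfix (t := j) h1
          omega
        · exact hb i j hij (by omega)
    · rintro rfl
      exact cond_one
  rw [hset, Finset.sum_singleton]
  simp only [inv_one, Equiv.Perm.one_apply]
  rw [List.ofFn_zero, word_nil, hshone]
  rw [show (List.ofFn fun j : Fin (q + 0 + l) => u (j : ℕ)) =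
      (List.ofFn fun j : Fin (q + 0) => u ((Fin.castAdd l j : Fin (q + 0 + l)) : ℕ)) ++
      (List.ofFn fun j : Fin l => u ((Fin.natAdd (q + 0) j : Fin (q + 0 + l)) : ℕ)) from
      List.ofFn_add]
  rw [word_append]
  congr 1

lemma master_l0 (sh : TensorAlgebra K V →ₗ[K] TensorAlgebra K V →ₗ[K] TensorAlgebra K V)
    (hshone' : ∀ u, sh u 1 = u) (q m n : ℕ) (hn : n = q + m + 0) (u : ℕ → V) :
    ∑ σ ∈ Finset.univ.filter (Cond n (q + m) q),
        word (K := K) (List.ofFn fun j : Fin n => u ((σ⁻¹ j : Fin n) : ℕ)) =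
      word (K := K) (List.ofFn fun j : Fin q => u (j : ℕ)) *
        sh (word (K := K) (List.ofFn fun j : Fin m => u (q + (j : ℕ))))
           (word (K := K) (List.ofFn fun j : Fin 0 => u (q + m + (j : ℕ)))) := by
  subst hn
  have hset : Finset.univ.filter (Cond (q + m + 0) (q + m) q) = {1} := by
    ext σ
    simp only [Finset.mem_filter, Finset.mem_univ, true_and, Finset.mem_singleton]
    constructor
    · rintro ⟨⟨ha, hb⟩, hfix⟩
      apply perm_eq_one_of_strictMono
      intro i j hij
      exact ha i j hij (by omega)
    · rintro rfl
      exact cond_one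
  rw [hset, Finset.sum_singleton]
  simp only [inv_one, Equiv.Perm.one_apply]
  rw [List.ofFn_zero, word_nil, hshone']
  rw [show (List.ofFn fun j : Fin (q + m + 0) => u (j : ℕ)) =
      (List.ofFn fun j : Fin (q + m) => u ((Fin.castAdd 0 j : Fin (q + m + 0)) : ℕ)) ++
      (List.ofFn fun j : Fin 0 => u ((Fin.natAdd (q + m) j : Fin (q + m + 0)) : ℕ)) from
      List.ofFn_add]
  rw [List.ofFn_zero, List.append_nil]
  rw [show (List.ofFn fun j : Fin (q + m) => u ((Fin.castAdd 0 j : Fin (q + m + 0)) : ℕ)) =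
      (List.ofFn fun j : Fin q =>
        u ((Fin.castAdd 0 (Fin.castAdd m j) : Fin (q + m + 0)) : ℕ)) ++
      (List.ofFn fun j : Fin m =>
        u ((Fin.castAdd 0 (Fin.natAdd q j) : Fin (q + m + 0)) : ℕ)) from List.ofFn_add]
  rw [word_append]
  congr 1

lemma master (sh : TensorAlgebra K V →ₗ[K] TensorAlgebra K V →ₗ[K] TensorAlgebra K V)
    (hshone : ∀ u, sh 1 u = u) (hshone' : ∀ u, sh u 1 = u)
    (hshcons : ∀ (x y : V) (u w : TensorAlgebra K V),
      sh (TensorAlgebra.ι K x * u) (TensorAlgebra.ι K y * w) =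
        TensorAlgebra.ι K x * sh u (TensorAlgebra.ι K y * w)
        + TensorAlgebra.ι K y * sh (TensorAlgebra.ι K x * u) w)
    (n : ℕ) :
    ∀ (N m l q : ℕ), m + l ≤ N → n = q + m + l → ∀ u : ℕ → V,
      ∑ σ ∈ Finset.univ.filter (Cond n (q + m) q),
          word (K := K) (List.ofFn fun j : Fin n => u ((σ⁻¹ j : Fin n) : ℕ)) =
        word (K := K) (List.ofFn fun j : Fin q => u (j : ℕ)) *
          sh (word (K := K) (List.ofFn fun j : Fin m => u (q + (j : ℕ))))
             (word (K := K) (List.ofFn fun j : Fin l => u (q + m + (j : ℕ)))) := by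
  intro N
  induction N with
  | zero =>
    intro m l q hN hn u
    have hm : m = 0 := by omega
    have hl : l = 0 := by omega
    subst hm; subst hl
    exact master_m0 sh hshone q 0 n hn u
  | succ N IH =>
    intro m l q hN hn u
    by_cases hm0 : m = 0
    · subst hm0; exact master_m0 sh hshone q l n hn u
    by_cases hl0 : l = 0
    · subst hl0; exact master_l0 sh hshone' q m n hn u
    obtain ⟨m', rfl⟩ : ∃ m', m = m' + 1 := ⟨m - 1, by omega⟩
    obtain ⟨l', rfl⟩ : ∃ l', l = l' + 1 := ⟨l - 1, by omega⟩
    subst hn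
    have hq2 : q + (m' + 1) < q + (m' + 1) + (l' + 1) := by omega
    have hQ : q < q + (m' + 1) + (l' + 1) := by omega
    rw [← Finset.sum_filter_add_sum_filter_not
        (Finset.univ.filter (Cond (q + (m' + 1) + (l' + 1)) (q + (m' + 1)) q))
        (fun σ => σ ⟨q, hQ⟩ = ⟨q, hQ⟩)
        (fun σ => word (K := K)
          (List.ofFn fun j : Fin (q + (m' + 1) + (l' + 1)) =>
            u ((σ⁻¹ j : Fin (q + (m' + 1) + (l' + 1))) : ℕ)))]
    rw [Finset.filter_filter, Finset.filter_filter]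
    have hs1 : (Finset.univ.filter fun σ : Equiv.Perm (Fin (q + (m' + 1) + (l' + 1))) =>
          Cond (q + (m' + 1) + (l' + 1)) (q + (m' + 1)) q σ ∧ σ ⟨q, hQ⟩ = ⟨q, hQ⟩)
        = Finset.univ.filter (Cond (q + (m' + 1) + (l' + 1)) (q + 1 + m') (q + 1)) := by
      ext σ
      simp only [Finset.mem_filter, Finset.mem_univ, true_and]
      constructor
      · rintro ⟨⟨⟨ha, hb⟩, hfix⟩, hfq⟩
        refine ⟨⟨fun i j hij hj => ha i j hij (by omega),
          fun i j hij hi => hb i j hij (by omega)⟩, ?_⟩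
        intro j hj
        rcases lt_or_ge (j : ℕ) q with h1 | h1
        · exact hfix j h1
        · have hjq : j = ⟨q, hQ⟩ := Fin.ext (show (j : ℕ) = q by omega)
          rw [hjq, hfq]
      · rintro ⟨⟨ha, hb⟩, hfix⟩
        exact ⟨⟨⟨fun i j hij hj => ha i j hij (by omega),
          fun i j hij hi => hb i j hij (by omega)⟩,
          fun j hj => hfix j (by omega)⟩, hfix ⟨q, hQ⟩ (Nat.lt_succ_self q)⟩
    have hs2 : (Finset.univ.filter fun σ : Equiv.Perm (Fin (q + (m' + 1) + (l' + 1))) =>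
          Cond (q + (m' + 1) + (l' + 1)) (q + (m' + 1)) q σ ∧ ¬σ ⟨q, hQ⟩ = ⟨q, hQ⟩)
        = (Finset.univ.filter fun σ : Equiv.Perm (Fin (q + (m' + 1) + (l' + 1))) =>
          Cond (q + (m' + 1) + (l' + 1)) (q + (m' + 1)) q σ ∧
            σ ⟨q + (m' + 1), hq2⟩ = ⟨q, hQ⟩) := by
      ext σ
      simp only [Finset.mem_filter, Finset.mem_univ, true_and]
      constructor
      · rintro ⟨hc, hne⟩
        refine ⟨hc, ?_⟩
        rcases cond_dichotomy hq2 (by omega) hc with h | h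
        · exact absurd h hne
        · exact h
      · rintro ⟨hc, heq⟩
        refine ⟨hc, fun hcon => ?_⟩
        have h1 := σ.injective (hcon.trans heq.symm)
        have h2 : q = q + (m' + 1) := congrArg Fin.val h1
        omega
    rw [hs1, hs2]
    have E1 := IH m' (l' + 1) (q + 1) (by omega) (by omega) u
    set u2 : ℕ → V := fun t =>
      u (if t = q then q + (m' + 1) else if q < t ∧ t ≤ q + (m' + 1) then t - 1 else t) with hu2
    have E2 := IH (m' + 1) l' (q + 1) (by omega) (by omega) u2
    have hbij : ∑ σ ∈ (Finset.univ.filter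
          fun σ : Equiv.Perm (Fin (q + (m' + 1) + (l' + 1))) =>
          Cond (q + (m' + 1) + (l' + 1)) (q + (m' + 1)) q σ ∧
            σ ⟨q + (m' + 1), hq2⟩ = ⟨q, hQ⟩),
          word (K := K) (List.ofFn fun j : Fin (q + (m' + 1) + (l' + 1)) =>
            u ((σ⁻¹ j : Fin (q + (m' + 1) + (l' + 1))) : ℕ))
        = ∑ σ ∈ Finset.univ.filter
            (Cond (q + (m' + 1) + (l' + 1)) (q + 1 + (m' + 1)) (q + 1)),
          word (K := K) (List.ofFn fun j : Fin (q + (m' + 1) + (l' + 1)) =>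
            u2 ((σ⁻¹ j : Fin (q + (m' + 1) + (l' + 1))) : ℕ)) := by
      apply Finset.sum_nbij' (fun σ => σ * cyc (q + (m' + 1) + (l' + 1)) q (m' + 1) hq2)
        (fun σ => σ * (cyc (q + (m' + 1) + (l' + 1)) q (m' + 1) hq2)⁻¹)
      · intro σ hσ
        rw [Finset.mem_filter] at hσ ⊢
        refine ⟨Finset.mem_univ _, ?_⟩
        exact cond_cyc_fwd hq2 hσ.2.1 hσ.2.2
      · intro σ hσ
        rw [Finset.mem_filter] at hσ ⊢
        refine ⟨Finset.mem_univ _, ?_⟩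
        exact cond_cyc_bwd hq2 hσ.2
      · intro σ _
        simp [mul_assoc]
      · intro σ _
        simp [mul_assoc]
      · intro σ hσ
        have hfun : (fun j : Fin (q + (m' + 1) + (l' + 1)) =>
            u2 (((σ * cyc (q + (m' + 1) + (l' + 1)) q (m' + 1) hq2)⁻¹ j :
              Fin (q + (m' + 1) + (l' + 1))) : ℕ)) =
            (fun j : Fin (q + (m' + 1) + (l' + 1)) =>
              u ((σ⁻¹ j : Fin (q + (m' + 1) + (l' + 1))) : ℕ)) := by
          funext j
          have hmi : (σ * cyc (q + (m' + 1) + (l' + 1)) q (m' + 1) hq2)⁻¹ j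
              = (cyc (q + (m' + 1) + (l' + 1)) q (m' + 1) hq2)⁻¹ (σ⁻¹ j) := by
            rw [mul_inv_rev]
            rfl
          rw [hmi]
          simp only [hu2]
          have hx := (σ⁻¹ j).isLt
          congr 1
          rw [cyc_inv_val hq2 (σ⁻¹ j)]
          split_ifs <;> omega
        rw [hfun]
    rw [hbij, E1, E2]
    -- now pure algebra
    have hw1 : word (K := K) (List.ofFn fun j : Fin (q + 1) => u (j : ℕ))
        = word (K := K) (List.ofFn fun j : Fin q => u (j : ℕ)) * TensorAlgebra.ι K (u q) :=
      word_ofFn_succ_last q u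
    have hw2 : word (K := K) (List.ofFn fun j : Fin (q + 1) => u2 (j : ℕ))
        = word (K := K) (List.ofFn fun j : Fin q => u (j : ℕ)) *
          TensorAlgebra.ι K (u (q + (m' + 1))) := by
      rw [word_ofFn_succ_last q u2]
      have hfun : (fun j : Fin q => u2 (j : ℕ)) = (fun j : Fin q => u (j : ℕ)) := by
        funext j
        have := j.isLt
        simp only [hu2]
        congr 1
        split_ifs <;> omega
      have hval : u2 q = u (q + (m' + 1)) := by simp [hu2]
      rw [hfun, hval]
    have hw3 : word (K := K) (List.ofFn fun j : Fin (l' + 1) => u (q + 1 + m' + (j : ℕ)))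
        = TensorAlgebra.ι K (u (q + (m' + 1))) *
          word (K := K) (List.ofFn fun j : Fin l' => u (q + (m' + 1) + 1 + (j : ℕ))) := by
      rw [word_ofFn_succ_head l' (fun t => u (q + 1 + m' + t))]
      have hfun : (fun j : Fin l' => u (q + 1 + m' + ((j : ℕ) + 1))) =
          (fun j : Fin l' => u (q + (m' + 1) + 1 + (j : ℕ))) :=
        funext fun j => congrArg u (by omega)
      rw [hfun]
      have hx : u (q + 1 + m' + 0) = u (q + (m' + 1)) := congrArg u (by omega)
      rw [hx]
    have hw4 : word (K := K) (List.ofFn fun j : Fin (m' + 1) => u2 (q + 1 + (j : ℕ)))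
        = TensorAlgebra.ι K (u q) *
          word (K := K) (List.ofFn fun j : Fin m' => u (q + 1 + (j : ℕ))) := by
      have hfun : (fun j : Fin (m' + 1) => u2 (q + 1 + (j : ℕ))) =
          (fun j : Fin (m' + 1) => u (q + (j : ℕ))) := by
        funext j
        have := j.isLt
        simp only [hu2]
        congr 1
        split_ifs <;> omega
      rw [hfun, word_ofFn_succ_head m' (fun t => u (q + t))]
      have hfun2 : (fun j : Fin m' => u (q + ((j : ℕ) + 1))) =
          (fun j : Fin m' => u (q + 1 + (j : ℕ))) :=
        funext fun j => congrArg u (by omega)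
      rw [hfun2]
      simp
    have hw5 : word (K := K)
          (List.ofFn fun j : Fin l' => u2 (q + 1 + (m' + 1) + (j : ℕ)))
        = word (K := K) (List.ofFn fun j : Fin l' => u (q + (m' + 1) + 1 + (j : ℕ))) := by
      have hfun : (fun j : Fin l' => u2 (q + 1 + (m' + 1) + (j : ℕ))) =
          (fun j : Fin l' => u (q + (m' + 1) + 1 + (j : ℕ))) := by
        funext j
        simp only [hu2]
        congr 1
        split_ifs <;> omega
      rw [hfun]
    have hw6 : word (K := K) (List.ofFn fun j : Fin (m' + 1) => u (q + (j : ℕ)))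
        = TensorAlgebra.ι K (u q) *
          word (K := K) (List.ofFn fun j : Fin m' => u (q + 1 + (j : ℕ))) := by
      rw [word_ofFn_succ_head m' (fun t => u (q + t))]
      have hfun2 : (fun j : Fin m' => u (q + ((j : ℕ) + 1))) =
          (fun j : Fin m' => u (q + 1 + (j : ℕ))) :=
        funext fun j => congrArg u (by omega)
      rw [hfun2]
      simp
    have hw7 : word (K := K)
          (List.ofFn fun j : Fin (l' + 1) => u (q + (m' + 1) + (j : ℕ)))
        = TensorAlgebra.ι K (u (q + (m' + 1))) *
          word (K := K) (List.ofFn fun j : Fin l' => u (q + (m' + 1) + 1 + (j : ℕ))) := by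
      rw [word_ofFn_succ_head l' (fun t => u (q + (m' + 1) + t))]
      have hfun : (fun j : Fin l' => u (q + (m' + 1) + ((j : ℕ) + 1))) =
          (fun j : Fin l' => u (q + (m' + 1) + 1 + (j : ℕ))) :=
        funext fun j => congrArg u (by omega)
      rw [hfun]
      simp
    rw [hw1, hw2, hw3, hw4, hw5, hw6, hw7]
    rw [hshcons (u q) (u (q + (m' + 1)))
        (word (K := K) (List.ofFn fun j : Fin m' => u (q + 1 + (j : ℕ))))
        (word (K := K) (List.ofFn fun j : Fin l' => u (q + (m' + 1) + 1 + (j : ℕ))))]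
    rw [mul_add, ← mul_assoc, ← mul_assoc]

end Master

open Classical in
/-- Explicit formula for the preLie product of `T(V,f)` in terms of
`(k,l)`-shuffles:
`v₁…vₖ • v_{k+1}…v_{k+l} = Σ_{σ∈Sh(k,l)} Σ_{i=1}^{m_k(σ)}
  (Id^{⊗(i-1)}⊗f⊗Id^{⊗(k+l-i)})(v_{σ⁻¹(1)}…v_{σ⁻¹(k+l)})`. -/
theorem bullet_shuffle_formula {K V : Type*} [Field K] [CharZero K]
    [AddCommGroup V] [Module K V]
    (sh : TensorAlgebra K V →ₗ[K] TensorAlgebra K V →ₗ[K] TensorAlgebra K V)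
    (hshone : ∀ u, sh 1 u = u) (hshone' : ∀ u, sh u 1 = u)
    (hshcons : ∀ (x y : V) (u w : TensorAlgebra K V),
      sh (TensorAlgebra.ι K x * u) (TensorAlgebra.ι K y * w) =
        TensorAlgebra.ι K x * sh u (TensorAlgebra.ι K y * w)
        + TensorAlgebra.ι K y * sh (TensorAlgebra.ι K x * u) w)
    (f : V →ₗ[K] V)
    (B : TensorAlgebra K V →ₗ[K] TensorAlgebra K V →ₗ[K] TensorAlgebra K V)
    (hB : ∀ (xs ys : List V),
      B (word (K := K) xs) (word (K := K) ys) =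
        ∑ i : Fin xs.length,
          word (K := K) (xs.take i) *
            (TensorAlgebra.ι K (f (xs.get i)) *
              sh (word (K := K) (xs.drop (i + 1))) (word (K := K) ys))) :
    ∀ (k l : ℕ) (v : Fin (k + l) → V),
      B (word (K := K) (List.ofFn fun i : Fin k => v (Fin.castAdd l i)))
        (word (K := K) (List.ofFn fun i : Fin l => v (Fin.natAdd k i))) =
        ∑ σ : Equiv.Perm (Fin (k + l)),
          if IsShuffle k l σ then
            ∑ p ∈ Finset.range (mk' k l σ),
              word (K := K) (List.ofFn fun j : Fin (k + l) =>
                if (j : ℕ) = p then f (v (σ⁻¹ j)) else v (σ⁻¹ j))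
          else 0 := by
  intro k l v
  set vv : ℕ → V := fun t => if h : t < k + l then v ⟨t, h⟩ else 0 with hvv
  set xs : List V := List.ofFn fun i : Fin k => v (Fin.castAdd l i) with hxs
  set ys : List V := List.ofFn fun i : Fin l => v (Fin.natAdd k i) with hys
  have hlen : xs.length = k := by simp [hxs]
  have hysl : ys = List.ofFn fun j : Fin l => vv (k + (j : ℕ)) := by
    rw [hys]
    refine congrArg _ (funext fun j => ?_)
    simp only [hvv]
    rw [dif_pos (show k + (j : ℕ) < k + l by omega)]
    exact congrArg v (Fin.ext (by simp))
  have hL : B (word (K := K) xs) (word (K := K) ys) =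
      ∑ p ∈ Finset.range k,
        word (K := K) (List.ofFn fun j : Fin p => vv (j : ℕ)) *
          (TensorAlgebra.ι K (f (vv p)) *
            sh (word (K := K) (List.ofFn fun j : Fin (k - (p + 1)) => vv (p + 1 + (j : ℕ))))
               (word (K := K) (List.ofFn fun j : Fin l => vv (k + (j : ℕ))))) := by
    rw [hB]
    have hget : ∀ i : Fin xs.length, xs.get i = vv (i : ℕ) := by
      intro i
      have hi : (i : ℕ) < k := by have := i.isLt; omega
      rw [List.get_eq_getElem]
      simp only [hxs, List.getElem_ofFn]
      simp only [hvv]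
      rw [dif_pos (show (i : ℕ) < k + l by omega)]
      exact congrArg v (Fin.ext (by simp))
    rw [show (∑ i : Fin xs.length,
        word (K := K) (xs.take (i : ℕ)) *
          (TensorAlgebra.ι K (f (xs.get i)) *
            sh (word (K := K) (xs.drop ((i : ℕ) + 1))) (word (K := K) ys)))
      = ∑ i : Fin xs.length,
        word (K := K) (xs.take (i : ℕ)) *
          (TensorAlgebra.ι K (f (vv (i : ℕ))) *
            sh (word (K := K) (xs.drop ((i : ℕ) + 1))) (word (K := K) ys))
      from Finset.sum_congr rfl fun i _ => by rw [hget i]]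
    rw [Fin.sum_univ_eq_sum_range (fun t : ℕ =>
        word (K := K) (xs.take t) *
          (TensorAlgebra.ι K (f (vv t)) *
            sh (word (K := K) (xs.drop (t + 1))) (word (K := K) ys))) xs.length]
    rw [hlen]
    refine Finset.sum_congr rfl fun p hp => ?_
    rw [Finset.mem_range] at hp
    have htake : xs.take p = List.ofFn fun j : Fin p => vv (j : ℕ) := by
      rw [hxs, take_ofFn' _ p (by omega)]
      refine congrArg _ (funext fun j => ?_)
      have := j.isLt
      simp only [hvv]
      rw [dif_pos (show (j : ℕ) < k + l by omega)]
      exact congrArg v (Fin.ext (by simp))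
    have hdrop : xs.drop (p + 1) =
        List.ofFn fun j : Fin (k - (p + 1)) => vv (p + 1 + (j : ℕ)) := by
      rw [hxs, drop_ofFn' _ (p + 1) (by omega)]
      refine congrArg _ (funext fun j => ?_)
      have := j.isLt
      simp only [hvv]
      rw [dif_pos (show p + 1 + (j : ℕ) < k + l by omega)]
      exact congrArg v (Fin.ext (by simp))
    rw [htake, hdrop, hysl]
  rw [hL]
  symm
  have step1 : ∀ σ : Equiv.Perm (Fin (k + l)),
      (if IsShuffle k l σ then
        ∑ p ∈ Finset.range (mk' k l σ),
          word (K := K) (List.ofFn fun j : Fin (k + l) =>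
            if (j : ℕ) = p then f (v (σ⁻¹ j)) else v (σ⁻¹ j))
      else 0)
      = ∑ p ∈ Finset.range k,
          if IsShuffle k l σ ∧ ∀ j : Fin (k + l), (j : ℕ) ≤ p → σ j = j then
            word (K := K) (List.ofFn fun j : Fin (k + l) =>
              if (j : ℕ) = p then f (v (σ⁻¹ j)) else v (σ⁻¹ j))
          else 0 := by
    intro σ
    by_cases hsh : IsShuffle k l σ
    · rw [if_pos hsh]
      have hrange : Finset.range (mk' k l σ) =
          (Finset.range k).filter
            (fun p => ∀ j : Fin (k + l), (j : ℕ) ≤ p → σ j = j) := by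
        ext p
        simp only [Finset.mem_range, Finset.mem_filter]
        exact mk'_lt_iff k l p σ
      rw [hrange, Finset.sum_filter]
      refine Finset.sum_congr rfl fun p _ => ?_
      exact if_congr (and_iff_right hsh).symm rfl rfl
    · rw [if_neg hsh]
      symm
      refine Finset.sum_eq_zero fun p _ => ?_
      rw [if_neg (by tauto)]
  rw [Finset.sum_congr rfl fun σ _ => step1 σ]
  rw [Finset.sum_comm]
  refine Finset.sum_congr rfl fun p hp => ?_
  rw [Finset.mem_range] at hp
  rw [← Finset.sum_filter]
  set up : ℕ → V := fun t => if t = p then f (vv p) else vv t with hup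
  have hMaster := master sh hshone hshone' hshcons (k + l)
    ((k - (p + 1)) + l) (k - (p + 1)) l (p + 1) (le_refl _) (by omega) up
  have hK : p + 1 + (k - (p + 1)) = k := by omega
  rw [hK] at hMaster
  have hfilter : (Finset.univ.filter fun σ : Equiv.Perm (Fin (k + l)) =>
        IsShuffle k l σ ∧ ∀ j : Fin (k + l), (j : ℕ) ≤ p → σ j = j)
      = Finset.univ.filter (Cond (k + l) k (p + 1)) := by
    ext σ
    simp only [Finset.mem_filter, Finset.mem_univ, true_and]
    constructor
    · rintro ⟨hs, hfx⟩
      exact ⟨⟨hs.1, hs.2⟩, fun j hj => hfx j (by omega)⟩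
    · rintro ⟨hs, hfx⟩
      exact ⟨⟨hs.1, hs.2⟩, fun j hj => hfx j (by omega)⟩
  rw [hfilter]
  have hsummand : ∀ σ ∈ Finset.univ.filter (Cond (k + l) k (p + 1)),
      word (K := K) (List.ofFn fun j : Fin (k + l) =>
        if (j : ℕ) = p then f (v (σ⁻¹ j)) else v (σ⁻¹ j))
      = word (K := K) (List.ofFn fun j : Fin (k + l) =>
          up ((σ⁻¹ j : Fin (k + l)) : ℕ)) := by
    intro σ hσ
    rw [Finset.mem_filter] at hσ
    have hfix : ∀ j : Fin (k + l), (j : ℕ) < p + 1 → σ j = j := hσ.2.2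
    have hfixinv : ∀ j : Fin (k + l), (j : ℕ) ≤ p → σ⁻¹ j = j := by
      intro j hj
      have h1 := hfix j (by omega)
      calc σ⁻¹ j = σ⁻¹ (σ j) := by rw [h1]
      _ = j := σ.symm_apply_apply j
    refine congrArg _ (congrArg _ (funext fun j => ?_))
    by_cases hjp : (j : ℕ) = p
    · rw [if_pos hjp]
      have h2 : σ⁻¹ j = j := hfixinv j (by omega)
      simp only [hup, h2, hjp, if_pos]
      refine congrArg f ?_
      simp only [hvv]
      rw [dif_pos (show p < k + l by omega)]
      exact congrArg v (Fin.ext hjp)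
    · rw [if_neg hjp]
      have h3 : ((σ⁻¹ j : Fin (k + l)) : ℕ) ≠ p := by
        intro hc
        have h4 : σ⁻¹ j = ⟨p, by omega⟩ := Fin.ext hc
        have h5 : j = σ ⟨p, by omega⟩ := by rw [← h4]; simp
        rw [hfix ⟨p, by omega⟩ (Nat.lt_succ_self p)] at h5
        exact hjp (by rw [h5])
      simp only [hup]
      rw [if_neg h3]
      simp only [hvv]
      rw [dif_pos (show ((σ⁻¹ j : Fin (k + l)) : ℕ) < k + l by omega)]
  rw [Finset.sum_congr rfl hsummand, hMaster]
  have hA : word (K := K) (List.ofFn fun j : Fin (p + 1) => up (j : ℕ))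
      = word (K := K) (List.ofFn fun j : Fin p => vv (j : ℕ)) *
        TensorAlgebra.ι K (f (vv p)) := by
    rw [word_ofFn_succ_last p up]
    have hf1 : (fun j : Fin p => up (j : ℕ)) = fun j : Fin p => vv (j : ℕ) := by
      funext j
      have := j.isLt
      simp only [hup]
      rw [if_neg (by omega)]
    have hf2 : up p = f (vv p) := by simp [hup]
    rw [hf1, hf2]
  have hM : (fun j : Fin (k - (p + 1)) => up (p + 1 + (j : ℕ)))
      = fun j : Fin (k - (p + 1)) => vv (p + 1 + (j : ℕ)) := by
    funext j
    simp only [hup]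
    rw [if_neg (by omega)]
  have hRt : (fun j : Fin l => up (k + (j : ℕ))) = fun j : Fin l => vv (k + (j : ℕ)) := by
    funext j
    simp only [hup]
    rw [if_neg (by omega)]
  rw [hA, hM, hRt, mul_assoc]
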